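/- Let f be normalized, monotone, and submodular on a finite set U, and let c ∈ (0,1]. Let A = {a_1,…,a_r} ⊆ U be a set of r distinct elements. Then ∑_{i=1}^r [g(A) − g(A − a_i)] + c·∑_{T ⊆ A} m_{|A|,|T|} f(T) = (c e^c/(e^c−1)) f(A), where g(A) = ∑_{B ⊆ A} m_{|A|−1,|B|−1} f(B). -/

import Mathlib

open MeasureTheory Real Finset

noncomputable def mcoef (c : ℝ) (a b : ℤ) : ℝ :=
  if a < 0 ∨ b < 0 then 0
  else ∫ p in (0:ℝ)..1,
    (c * Real.exp (c * p) / (Real.exp c - 1)) * p ^ b.toNat * (1 - p) ^ (a - b).toNat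

noncomputable def harm (k : ℕ) : ℝ := ∑ t ∈ Finset.range k, (1 : ℝ) / (t + 1)

noncomputable def gfun (c : ℝ) {U : Type*} [DecidableEq U] (f : Finset U → ℝ)
    (A : Finset U) : ℝ :=
  ∑ B ∈ A.powerset, mcoef c ((A.card : ℤ) - 1) ((B.card : ℤ) - 1) * f B


noncomputable def Jint (c : ℝ) (k j : ℕ) : ℝ :=
  ∫ p in (0:ℝ)..1, Real.exp (c*p) * p^k * (1-p)^j

lemma Jcont (c : ℝ) (k j : ℕ) :
    Continuous (fun p : ℝ => Real.exp (c*p) * p^k * (1-p)^j) := by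
  continuity

lemma Jii (c : ℝ) (k j : ℕ) :
    IntervalIntegrable (fun p : ℝ => Real.exp (c*p) * p^k * (1-p)^j)
      MeasureTheory.volume 0 1 :=
  (Jcont c k j).intervalIntegrable _ _

lemma Jpascal (c : ℝ) (k j : ℕ) : Jint c k (j+1) + Jint c (k+1) j = Jint c k j := by
  unfold Jint
  rw [← intervalIntegral.integral_add (Jii c k (j+1)) (Jii c (k+1) j)]
  apply intervalIntegral.integral_congr
  intro p _
  ring

lemma Jftc (c : ℝ) (k j : ℕ) :
    c * Jint c (k+1) j + (k+1 : ℝ) * Jint c k j - (j : ℝ) * Jint c (k+1) (j-1)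
      = if j = 0 then Real.exp c else 0 := by
  have hd : ∀ p ∈ Set.uIcc (0:ℝ) 1,
      HasDerivAt (fun p : ℝ => Real.exp (c*p) * p^(k+1) * (1-p)^j)
        (c * (Real.exp (c*p) * p^(k+1) * (1-p)^j)
          + (k+1 : ℝ) * (Real.exp (c*p) * p^k * (1-p)^j)
          - (j : ℝ) * (Real.exp (c*p) * p^(k+1) * (1-p)^(j-1))) p := by
    intro p _
    have h1 : HasDerivAt (fun p : ℝ => Real.exp (c*p)) (Real.exp (c*p) * c) p := by
      simpa using ((hasDerivAt_id p).const_mul c).exp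
    have h2 : HasDerivAt (fun p : ℝ => p^(k+1)) ((k+1 : ℝ) * p^k) p := by
      simpa using hasDerivAt_pow (k+1) p
    have h3 : HasDerivAt (fun p : ℝ => (1-p)^j) ((j:ℝ) * (1-p)^(j-1) * (-1)) p := by
      exact ((hasDerivAt_id p).const_sub 1).pow j
    have := (h1.fun_mul h2).fun_mul h3
    refine this.congr_deriv ?_
    ring
  have hint : IntervalIntegrable (fun p : ℝ =>
      c * (Real.exp (c*p) * p^(k+1) * (1-p)^j)
        + (k+1 : ℝ) * (Real.exp (c*p) * p^k * (1-p)^j)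
        - (j : ℝ) * (Real.exp (c*p) * p^(k+1) * (1-p)^(j-1)))
      MeasureTheory.volume 0 1 := by
    apply IntervalIntegrable.sub
    apply IntervalIntegrable.add
    · exact (Jii c (k+1) j).const_mul c
    · exact (Jii c k j).const_mul _
    · exact (Jii c (k+1) (j-1)).const_mul _
  have := intervalIntegral.integral_eq_sub_of_hasDerivAt hd hint
  rw [intervalIntegral.integral_sub ((((Jii c (k+1) j).const_mul c)).add
        ((Jii c k j).const_mul _)) ((Jii c (k+1) (j-1)).const_mul _),
      intervalIntegral.integral_add ((Jii c (k+1) j).const_mul c) ((Jii c k j).const_mul _),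
      intervalIntegral.integral_const_mul, intervalIntegral.integral_const_mul,
      intervalIntegral.integral_const_mul] at this
  unfold Jint
  rw [this]
  rcases Nat.eq_zero_or_pos j with hj | hj
  · simp [hj]
  · rw [if_neg hj.ne']
    simp [zero_pow hj.ne']


lemma mcoef_eq (c : ℝ) (a b : ℤ) (hb : 0 ≤ b) (hab : 0 ≤ a) :
    mcoef c a b = c / (Real.exp c - 1) * Jint c b.toNat (a - b).toNat := by
  unfold mcoef Jint
  rw [if_neg (by omega), ← intervalIntegral.integral_const_mul]
  apply intervalIntegral.integral_congr
  intro p _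
  ring

lemma expc_ne (c : ℝ) (hc0 : 0 < c) : Real.exp c - 1 ≠ 0 := by
  have := Real.add_one_lt_exp (x := c) hc0.ne'
  nlinarith

lemma coef_id (c : ℝ) (hc0 : 0 < c) (r b : ℕ) (hb : 1 ≤ b) (hbr : b ≤ r) :
    (r : ℝ) * mcoef c ((r:ℤ) - 1) ((b:ℤ) - 1)
      - ((r - b : ℕ) : ℝ) * mcoef c ((r:ℤ) - 2) ((b:ℤ) - 1)
      + c * mcoef c (r : ℤ) (b : ℤ)
      = if b = r then c * Real.exp c / (Real.exp c - 1) else 0 := by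
  have hs := expc_ne c hc0
  set s := c / (Real.exp c - 1) with hsdef
  have h1 : mcoef c ((r:ℤ) - 1) ((b:ℤ) - 1) = s * Jint c (b-1) (r-b) := by
    rw [mcoef_eq c _ _ (by omega) (by omega)]
    congr 2 <;> omega
  have h3 : mcoef c (r : ℤ) (b : ℤ) = s * Jint c b (r-b) := by
    rw [mcoef_eq c _ _ (by omega) (by omega)]
    congr 2 <;> omega
  rcases eq_or_lt_of_le hbr with hbeq | hlt
  · -- b = r
    subst hbeq
    rw [if_pos rfl, h1, h3]
    have hftc := Jftc c (b-1) 0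
    rw [if_pos rfl] at hftc
    have hb1 : b - 1 + 1 = b := by omega
    rw [hb1] at hftc
    have hcast : ((b : ℝ) - 1 + 1) = (b : ℝ) := by ring
    have hbb : ((b - 1 : ℕ) : ℝ) + 1 = (b : ℝ) := by
      push_cast [Nat.cast_sub hb]; ring
    simp only [Nat.sub_self, Nat.cast_zero, zero_mul, sub_zero] at hftc ⊢
    rw [hbb] at hftc
    rw [hsdef]
    linear_combination c / (Real.exp c - 1) * hftc
  · -- b < r
    rw [if_neg (by omega)]
    have h2 : mcoef c ((r:ℤ) - 2) ((b:ℤ) - 1) = s * Jint c (b-1) (r-b-1) := by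
      rw [mcoef_eq c _ _ (by omega) (by omega)]
      congr 2 <;> omega
    rw [h1, h2, h3]
    have hftc := Jftc c (b-1) (r-b)
    rw [if_neg (by omega)] at hftc
    have hb1 : b - 1 + 1 = b := by omega
    rw [hb1] at hftc
    have hp := Jpascal c (b-1) (r-b-1)
    have hp1 : r - b - 1 + 1 = r - b := by omega
    rw [hp1, hb1] at hp
    have hbb : ((b - 1 : ℕ) : ℝ) + 1 = (b : ℝ) := by
      push_cast [Nat.cast_sub hb]; ring
    rw [hbb] at hftc
    have hrb : ((r - b : ℕ) : ℝ) = (r : ℝ) - b := by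
      push_cast [Nat.cast_sub hbr]; ring
    rw [hrb] at hftc ⊢
    -- goal: r * (s * J(b-1)(r-b)) - (r-b)*(s*J(b-1)(r-b-1)) + c*(s*J b (r-b)) = 0
    -- hftc : c * J b (r-b) + b * J (b-1) (r-b) - (r-b) * J b (r-b-1) = 0
    -- hp : J (b-1) (r-b) + J b (r-b-1) = J (b-1) (r-b-1)
    linear_combination s * hftc + ((r:ℝ) - b) * s * hp


theorem stmt_16 (c : ℝ) (hc0 : 0 < c) (hc1 : c ≤ 1) {U : Type*} [DecidableEq U]
    (f : Finset U → ℝ)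
    (hnorm : f ∅ = 0)
    (hmono : ∀ A B : Finset U, A ⊆ B → f A ≤ f B)
    (hsub : ∀ A B : Finset U, f A + f B ≥ f (A ∪ B) + f (A ∩ B))
    (r : ℕ) (a : Fin r → U) (ha : Function.Injective a)
    (A : Finset U) (hA : A = Finset.image a Finset.univ) :
    ∑ i : Fin r, (gfun c f A - gfun c f (A.erase (a i))) +
        c * ∑ T ∈ A.powerset, mcoef c (A.card : ℤ) (T.card : ℤ) * f T =
      c * Real.exp c / (Real.exp c - 1) * f A := by
  have hcard : A.card = r := by
    rw [hA, Finset.card_image_of_injective _ ha, Finset.card_univ, Fintype.card_fin]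
  -- step 1: sum over erased sets
  have key1 : ∀ i : Fin r, gfun c f (A.erase (a i)) =
      ∑ B ∈ A.powerset, (if a i ∈ B then 0
        else mcoef c ((r:ℤ) - 2) ((B.card:ℤ) - 1) * f B) := by
    intro i
    have hmem : a i ∈ A := by rw [hA]; exact Finset.mem_image_of_mem a (Finset.mem_univ i)
    have hr1 : 1 ≤ r := Fin.pos i
    have hce : (A.erase (a i)).card = r - 1 := by
      rw [Finset.card_erase_of_mem hmem, hcard]
    have hps : (A.erase (a i)).powerset = A.powerset.filter (fun B => a i ∉ B) := by
      ext B
      simp [Finset.mem_powerset, Finset.subset_erase, and_comm]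
    unfold gfun
    rw [hce, hps, Finset.sum_filter]
    apply Finset.sum_congr rfl
    intro B _
    have : ((r - 1 : ℕ) : ℤ) - 1 = (r:ℤ) - 2 := by omega
    rw [this]
    by_cases hx : a i ∈ B <;> simp [hx]
  have e2 : ∑ i : Fin r, gfun c f (A.erase (a i)) =
      ∑ B ∈ A.powerset, ((r - B.card : ℕ) : ℝ) *
        (mcoef c ((r:ℤ) - 2) ((B.card:ℤ) - 1) * f B) := by
    rw [Finset.sum_congr rfl (fun i _ => key1 i), Finset.sum_comm]
    apply Finset.sum_congr rfl
    intro B hB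
    have hBA : B ⊆ A := Finset.mem_powerset.mp hB
    have himg : Finset.image a (Finset.univ.filter fun i => a i ∈ B) = B := by
      ext x
      simp only [Finset.mem_image, Finset.mem_filter, Finset.mem_univ, true_and]
      constructor
      · rintro ⟨i, hi, rfl⟩; exact hi
      · intro hx
        have hxA : x ∈ A := hBA hx
        rw [hA] at hxA
        obtain ⟨i, -, rfl⟩ := Finset.mem_image.mp hxA
        exact ⟨i, hx, rfl⟩
    have hcount : (Finset.univ.filter fun i : Fin r => a i ∈ B).card = B.card := by
      conv_rhs => rw [← himg]
      rw [Finset.card_image_of_injective _ ha]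
    have hcount2 : (Finset.univ.filter fun i : Fin r => a i ∉ B).card = r - B.card := by
      have := Finset.card_filter_add_card_filter_not
        (s := (Finset.univ : Finset (Fin r))) (p := fun i => a i ∈ B)
      rw [hcount, Finset.card_univ, Fintype.card_fin] at this
      omega
    rw [Finset.sum_ite, Finset.sum_const_zero, zero_add, Finset.sum_const, hcount2,
      nsmul_eq_mul]
  have e1 : ∑ i : Fin r, gfun c f A =
      ∑ B ∈ A.powerset, (r : ℝ) * (mcoef c ((r:ℤ) - 1) ((B.card:ℤ) - 1) * f B) := by
    rw [Finset.sum_const, Finset.card_univ, Fintype.card_fin, nsmul_eq_mul]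
    unfold gfun
    rw [hcard, Finset.mul_sum]
  rw [Finset.sum_sub_distrib, e1, e2, Finset.mul_sum, ← Finset.sum_sub_distrib,
    ← Finset.sum_add_distrib, hcard]
  have final : ∀ B ∈ A.powerset,
      ((r : ℝ) * (mcoef c ((r:ℤ) - 1) ((B.card:ℤ) - 1) * f B)
        - ((r - B.card : ℕ) : ℝ) * (mcoef c ((r:ℤ) - 2) ((B.card:ℤ) - 1) * f B))
        + c * (mcoef c (r:ℤ) (B.card:ℤ) * f B)
      = (if B = A then c * Real.exp c / (Real.exp c - 1) else 0) * f B := by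
    intro B hB
    have hBA : B ⊆ A := Finset.mem_powerset.mp hB
    rcases eq_or_ne B ∅ with hBe | hBe
    · subst hBe; simp [hnorm]
    · have hb1 : 1 ≤ B.card := Finset.card_pos.mpr (Finset.nonempty_iff_ne_empty.mpr hBe)
      have hbr : B.card ≤ r := hcard ▸ Finset.card_le_card hBA
      have hcoef := coef_id c hc0 r B.card hb1 hbr
      have hiff : B.card = r ↔ B = A := by
        constructor
        · intro h; exact Finset.eq_of_subset_of_card_le hBA (by omega)
        · intro h; rw [h, hcard]
      rw [show (if B = A then c * Real.exp c / (Real.exp c - 1) else 0)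
          = (if B.card = r then c * Real.exp c / (Real.exp c - 1) else 0) by
        simp only [hiff]]
      rw [← hcoef]
      ring
    
  rw [Finset.sum_congr rfl final, Finset.sum_eq_single A]
  · simp
  · intro B _ hne; rw [if_neg hne, zero_mul]
  · intro h; exact absurd (Finset.mem_powerset_self A) h
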